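/- For Q ∈ N, the tangent space T_Q N equals { P ∈ S₀ : tr(PQ) = 0 and tr(PQ²) = 0 }, and the normal space (T_Q N)^⊥ inside S₀ is spanned by Q/(√2 r*) and (√6/(2r*²))(Q² − (2r*²/3)I). -/

import Mathlib

open Matrix

attribute [local instance] Matrix.frobeniusNormedAddCommGroup Matrix.frobeniusNormedSpace

/-- The manifold `N = { r*(n⊗n − m⊗m) : n, m ∈ ℝ³ orthonormal }`. -/
def Nman (rs : ℝ) : Set (Matrix (Fin 3) (Fin 3) ℝ) :=
  {A | ∃ n m : Fin 3 → ℝ, n ⬝ᵥ n = 1 ∧ m ⬝ᵥ m = 1 ∧ n ⬝ᵥ m = 0 ∧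
    A = rs • (vecMulVec n n - vecMulVec m m)}

attribute [local instance] Matrix.frobeniusNormedRing Matrix.frobeniusNormedAlgebra

namespace Stmt3Aux

open Filter Topology NormedSpace

set_option maxHeartbeats 1000000

abbrev M3 := Matrix (Fin 3) (Fin 3) ℝ

lemma trace_vecMulVec (a b : Fin 3 → ℝ) : (vecMulVec a b).trace = a ⬝ᵥ b := by
  simp [Matrix.trace, Matrix.diag, vecMulVec_apply, dotProduct]

lemma vecMulVec_mul_vecMulVec (a b c d : Fin 3 → ℝ) :
    vecMulVec a b * vecMulVec c d = (b ⬝ᵥ c) • vecMulVec a d := by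
  ext i j
  simp only [Matrix.mul_apply, vecMulVec_apply, Matrix.smul_apply, dotProduct, smul_eq_mul,
    Fin.sum_univ_three]
  ring

lemma mul_vecMulVec (M : M3) (a b : Fin 3 → ℝ) :
    M * vecMulVec a b = vecMulVec (M *ᵥ a) b := by
  ext i j
  simp only [Matrix.mul_apply, vecMulVec_apply, Matrix.mulVec, dotProduct, Fin.sum_univ_three]
  ring

lemma vecMulVec_mul (a b : Fin 3 → ℝ) (M : M3) :
    vecMulVec a b * M = vecMulVec a (Mᵀ *ᵥ b) := by
  ext i j
  simp only [Matrix.mul_apply, vecMulVec_apply, Matrix.mulVec, Matrix.transpose_apply, dotProduct,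
    Fin.sum_univ_three]
  ring

lemma transpose_vecMulVec (a b : Fin 3 → ℝ) : (vecMulVec a b)ᵀ = vecMulVec b a := by
  ext i j; simp [vecMulVec_apply, mul_comm]

lemma vecMulVec_mulVec (a b c : Fin 3 → ℝ) : vecMulVec a b *ᵥ c = (b ⬝ᵥ c) • a := by
  ext i
  simp only [Matrix.mulVec, vecMulVec_apply, dotProduct, Pi.smul_apply, smul_eq_mul,
    Fin.sum_univ_three]
  ring

lemma trace_mul_vecMulVec (P : M3) (a b : Fin 3 → ℝ) :
    (P * vecMulVec a b).trace = b ⬝ᵥ (P *ᵥ a) := by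
  simp only [Matrix.trace, Matrix.diag, Matrix.mul_apply, vecMulVec_apply, dotProduct,
    Matrix.mulVec, Fin.sum_univ_three]
  ring

lemma dot_mulVec_symm {P : M3} (hPs : Pᵀ = P) (u v : Fin 3 → ℝ) :
    u ⬝ᵥ (P *ᵥ v) = v ⬝ᵥ (P *ᵥ u) := by
  rw [dotProduct_mulVec, ← Matrix.mulVec_transpose, hPs, dotProduct_comm]

lemma vecMulVec_mul_mul_vecMulVec (a b c d : Fin 3 → ℝ) (P : M3) :
    vecMulVec a b * P * vecMulVec c d = (b ⬝ᵥ (P *ᵥ c)) • vecMulVec a d := by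
  rw [vecMulVec_mul, vecMulVec_mul_vecMulVec, Matrix.mulVec_transpose, ← dotProduct_mulVec]

lemma completeness {n m : Fin 3 → ℝ} (hn : n ⬝ᵥ n = 1) (hm : m ⬝ᵥ m = 1) (hnm : n ⬝ᵥ m = 0) :
    vecMulVec n n + vecMulVec m m + vecMulVec (crossProduct n m) (crossProduct n m) = 1 := by
  set p := crossProduct n m with hp
  have hpp : p ⬝ᵥ p = 1 := by
    rw [hp, cross_dot_cross, hn, hm, hnm]; ring
  have hnp : n ⬝ᵥ p = 0 := dot_self_cross n m
  have hmp : m ⬝ᵥ p = 0 := dot_cross_self n m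
  set B : M3 := Matrix.of (fun i j => ![n, m, p] j i) with hB
  have key : ∀ (u v : Fin 3 → ℝ), u ⬝ᵥ v = ∑ k, u k * v k := fun u v => rfl
  have h1 : Bᵀ * B = 1 := by
    ext i j
    simp only [hB, Matrix.mul_apply, Matrix.transpose_apply, Matrix.of_apply]
    fin_cases i <;> fin_cases j <;>
      simp only [Matrix.cons_val_zero, Matrix.cons_val_one, Matrix.head_cons,
        Matrix.cons_val_two, Matrix.tail_cons, Matrix.one_apply, Fin.zero_eta, Fin.mk_one] <;>
      rw [← key] <;>
      simp_all [dotProduct_comm m n, dotProduct_comm p n, dotProduct_comm p m,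
        (dotProduct_comm (crossProduct n m) n).trans (dot_self_cross n m),
        (dotProduct_comm (crossProduct n m) m).trans (dot_cross_self n m)]
  have h2 : B * Bᵀ = 1 := mul_eq_one_comm.mp h1
  rw [← h2]
  ext i j
  simp [hB, Matrix.mul_apply, Matrix.transpose_apply, Fin.sum_univ_three, vecMulVec_apply]

lemma Nman_props {rs : ℝ} {R : M3} (h : R ∈ Nman rs) :
    Rᵀ = R ∧ R.trace = 0 ∧ (R * R).trace = 2 * rs ^ 2 ∧ (R * (R * R)).trace = 0 := by
  obtain ⟨n, m, hn, hm, hnm, rfl⟩ := h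
  have hmn : m ⬝ᵥ n = 0 := by rw [dotProduct_comm]; exact hnm
  have hsq : (vecMulVec n n - vecMulVec m m) * (vecMulVec n n - vecMulVec m m)
      = vecMulVec n n + vecMulVec m m := by
    simp only [Matrix.sub_mul, Matrix.mul_sub, vecMulVec_mul_vecMulVec, hn, hm, hnm, hmn,
      one_smul, zero_smul]
    abel
  refine ⟨?_, ?_, ?_, ?_⟩
  · simp [Matrix.transpose_smul, Matrix.transpose_sub, transpose_vecMulVec]
  · simp [Matrix.trace_smul, Matrix.trace_sub, trace_vecMulVec, hn, hm]
  · rw [Matrix.smul_mul, Matrix.mul_smul, smul_smul, hsq]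
    simp only [Matrix.trace_smul, Matrix.trace_add, trace_vecMulVec, hn, hm, smul_eq_mul]
    ring
  · have h3 : (vecMulVec n n - vecMulVec m m) *
        ((vecMulVec n n - vecMulVec m m) * (vecMulVec n n - vecMulVec m m))
        = vecMulVec n n - vecMulVec m m := by
      rw [hsq]
      simp only [Matrix.sub_mul, Matrix.mul_add, Matrix.add_mul, vecMulVec_mul_vecMulVec, hn, hm,
        hnm, hmn, one_smul, zero_smul]
      abel
    simp only [Matrix.smul_mul, Matrix.mul_smul, smul_smul, h3]
    simp [Matrix.trace_smul, Matrix.trace_sub, trace_vecMulVec, hn, hm]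

lemma mem_tangentConeAt_of_curve {E : Type*} [NormedAddCommGroup E] [NormedSpace ℝ E]
    {s : Set E} {γ : ℝ → E} {x y : E} (h0 : γ 0 = x) (hs : ∀ t, γ t ∈ s)
    (hd : HasDerivAt γ y 0) : y ∈ tangentConeAt ℝ s x := by
  rw [mem_tangentConeAt_iff_exists_seq_norm_tendsto_atTop]
  refine ⟨fun k => (k : ℝ) + 1, fun k => γ (((k : ℝ) + 1)⁻¹) - x, ?_, ?_, ?_⟩
  swap
  · exact Eventually.of_forall fun k => by simpa using hs _
  · have : Tendsto (fun k : ℕ => (k : ℝ) + 1) atTop atTop :=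
      tendsto_atTop_add_const_right _ 1 tendsto_natCast_atTop_atTop
    exact tendsto_abs_atTop_atTop.comp this
  · have hslope : Tendsto (slope γ 0) (𝓝[≠] 0) (𝓝 y) :=
      hasDerivAt_iff_tendsto_slope.mp hd
    have hseq : Tendsto (fun k : ℕ => ((k : ℝ) + 1)⁻¹) atTop (𝓝[≠] 0) := by
      refine tendsto_nhdsWithin_of_tendsto_nhds_of_eventually_within _ ?_ ?_
      · exact tendsto_one_div_add_atTop_nhds_zero_nat.congr (by simp [one_div])
      · refine Eventually.of_forall fun k => Set.mem_compl_singleton_iff.mpr ?_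
        positivity
    have := hslope.comp hseq
    refine this.congr fun k => ?_
    simp only [Function.comp, slope_def_module, h0, sub_zero, smul_sub]
    rw [inv_inv]

/-- existence of a completing third basis vector -/
lemma exists_completion {n m : Fin 3 → ℝ} (hn : n ⬝ᵥ n = 1) (hm : m ⬝ᵥ m = 1)
    (hnm : n ⬝ᵥ m = 0) :
    ∃ p : Fin 3 → ℝ, p ⬝ᵥ p = 1 ∧ n ⬝ᵥ p = 0 ∧ m ⬝ᵥ p = 0 ∧
      vecMulVec n n + vecMulVec m m + vecMulVec p p = 1 :=
  ⟨crossProduct n m, by rw [cross_dot_cross, hn, hm, hnm]; ring,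
    dot_self_cross n m, dot_cross_self n m, completeness hn hm hnm⟩

/-- the general decomposition of a symmetric matrix in an orthonormal basis `n, m, p`. -/
lemma decomp {n m p : Fin 3 → ℝ}
    (hC : vecMulVec n n + vecMulVec m m + vecMulVec p p = 1)
    {P : M3} (hPs : Pᵀ = P) :
    P = (n ⬝ᵥ (P *ᵥ n)) • vecMulVec n n + (m ⬝ᵥ (P *ᵥ m)) • vecMulVec m m
      + (p ⬝ᵥ (P *ᵥ p)) • vecMulVec p p
      + (n ⬝ᵥ (P *ᵥ m)) • (vecMulVec n m + vecMulVec m n)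
      + (n ⬝ᵥ (P *ᵥ p)) • (vecMulVec n p + vecMulVec p n)
      + (m ⬝ᵥ (P *ᵥ p)) • (vecMulVec m p + vecMulVec p m) := by
  have expand : P = (vecMulVec n n + vecMulVec m m + vecMulVec p p) * P *
      (vecMulVec n n + vecMulVec m m + vecMulVec p p) := by
    rw [hC, Matrix.one_mul, Matrix.mul_one]
  conv_lhs => rw [expand]
  simp only [Matrix.add_mul, Matrix.mul_add]
  simp only [vecMulVec_mul_mul_vecMulVec]
  rw [dot_mulVec_symm hPs m n, dot_mulVec_symm hPs p n, dot_mulVec_symm hPs p m]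
  simp only [smul_add]
  abel

lemma Qfacts {rs : ℝ} {n m : Fin 3 → ℝ} (hn : n ⬝ᵥ n = 1) (hm : m ⬝ᵥ m = 1) (hnm : n ⬝ᵥ m = 0)
    {p : Fin 3 → ℝ} (hpp : p ⬝ᵥ p = 1) (hnp : n ⬝ᵥ p = 0) (hmp : m ⬝ᵥ p = 0) :
    (rs • (vecMulVec n n - vecMulVec m m) : M3) * (rs • (vecMulVec n n - vecMulVec m m)) =
      (rs * rs) • (vecMulVec n n + vecMulVec m m) := by
  have hmn : m ⬝ᵥ n = 0 := by rw [dotProduct_comm]; exact hnm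
  rw [Matrix.smul_mul, Matrix.mul_smul, smul_smul]
  congr 1
  simp only [Matrix.sub_mul, Matrix.mul_sub, vecMulVec_mul_vecMulVec, hn, hm, hnm, hmn,
    one_smul, zero_smul]
  abel

lemma tangent_superset {rs : ℝ} (hrs : 0 < rs) {Q : M3} (hQ : Q ∈ Nman rs) :
    {P : M3 | Pᵀ = P ∧ P.trace = 0 ∧
        (P * Q).trace = 0 ∧ (P * (Q * Q)).trace = 0} ⊆ tangentConeAt ℝ (Nman rs) Q := by
  obtain ⟨n, m, hn, hm, hnm, hQdef⟩ := hQ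
  obtain ⟨p, hpp, hnp, hmp, hC⟩ := exists_completion hn hm hnm
  subst hQdef
  have hrs' : rs ≠ 0 := ne_of_gt hrs
  have hmn : m ⬝ᵥ n = 0 := by rw [dotProduct_comm]; exact hnm
  have hpn : p ⬝ᵥ n = 0 := by rw [dotProduct_comm]; exact hnp
  have hpm : p ⬝ᵥ m = 0 := by rw [dotProduct_comm]; exact hmp
  have hQ2 := Qfacts (rs := rs) hn hm hnm hpp hnp hmp
  rintro P ⟨hPs, hPtr, hPQ, hPQ2⟩
  -- coefficients
  set x := n ⬝ᵥ (P *ᵥ m) with hx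
  set y := n ⬝ᵥ (P *ᵥ p) with hy
  set z := m ⬝ᵥ (P *ᵥ p) with hz
  -- diagonal coefficients vanish
  have e1 : rs * (n ⬝ᵥ (P *ᵥ n) - m ⬝ᵥ (P *ᵥ m)) = 0 := by
    rw [← hPQ, Matrix.mul_smul, Matrix.trace_smul, Matrix.mul_sub, Matrix.trace_sub,
      trace_mul_vecMulVec, trace_mul_vecMulVec, smul_eq_mul]
  have e2 : (rs * rs) * (n ⬝ᵥ (P *ᵥ n) + m ⬝ᵥ (P *ᵥ m)) = 0 := by
    rw [hQ2] at hPQ2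
    rw [← hPQ2, Matrix.mul_smul, Matrix.trace_smul, Matrix.mul_add, Matrix.trace_add,
      trace_mul_vecMulVec, trace_mul_vecMulVec, smul_eq_mul]
  have e3 : n ⬝ᵥ (P *ᵥ n) + m ⬝ᵥ (P *ᵥ m) + p ⬝ᵥ (P *ᵥ p) = 0 := by
    have : (P * (vecMulVec n n + vecMulVec m m + vecMulVec p p)).trace = P.trace := by
      rw [hC, Matrix.mul_one]
    rw [hPtr, Matrix.mul_add, Matrix.mul_add, Matrix.trace_add, Matrix.trace_add,
      trace_mul_vecMulVec, trace_mul_vecMulVec, trace_mul_vecMulVec] at this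
    exact this
  have hcnn : n ⬝ᵥ (P *ᵥ n) = 0 := by
    rcases mul_eq_zero.mp e1 with h | h
    · exact absurd h hrs'
    rcases mul_eq_zero.mp e2 with h2 | h2
    · exact absurd (mul_self_eq_zero.mp h2) hrs'
    linarith
  have hcmm : m ⬝ᵥ (P *ᵥ m) = 0 := by
    rcases mul_eq_zero.mp e1 with h | h
    · exact absurd h hrs'
    linarith
  have hcpp : p ⬝ᵥ (P *ᵥ p) = 0 := by linarith
  have hdecomp : P = x • (vecMulVec n m + vecMulVec m n)
      + y • (vecMulVec n p + vecMulVec p n) + z • (vecMulVec m p + vecMulVec p m) := by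
    have := decomp hC hPs
    rw [hcnn, hcmm, hcpp, ← hx, ← hy, ← hz] at this
    simpa using this
  -- the skew generator
  set A : M3 := (x / (2 * rs)) • (vecMulVec m n - vecMulVec n m)
      + (y / rs) • (vecMulVec p n - vecMulVec n p)
      + (z / rs) • (vecMulVec m p - vecMulVec p m) with hA
  have hAt : Aᵀ = -A := by
    rw [hA]
    simp only [Matrix.transpose_add, Matrix.transpose_smul, Matrix.transpose_sub,
      transpose_vecMulVec, neg_add, ← smul_neg, neg_sub]
  have hbracket : A * (rs • (vecMulVec n n - vecMulVec m m)) -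
      (rs • (vecMulVec n n - vecMulVec m m)) * A = P := by
    rw [hA]
    conv_rhs => rw [hdecomp]
    simp only [Matrix.add_mul, Matrix.mul_add, Matrix.sub_mul, Matrix.mul_sub, Matrix.smul_mul,
      Matrix.mul_smul]
    simp only [vecMulVec_mul_vecMulVec, hn, hm, hnm, hmn, hnp, hpn, hmp, hpm, hpp,
      one_smul, zero_smul, smul_zero, smul_smul]
    match_scalars <;> (field_simp; try ring)
  -- the curve
  have key : ∀ t : ℝ, (exp (t • A))ᵀ * exp (t • A) = 1 := by
    intro t
    have h1 : (exp (t • A))ᵀ = exp (-(t • A)) := by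
      rw [← Matrix.exp_transpose, Matrix.transpose_smul, hAt, smul_neg]
    rw [h1, ← Matrix.exp_add_of_commute (-(t • A)) (t • A) (Commute.neg_left rfl), neg_add_cancel, exp_zero]
  have hdot : ∀ (t : ℝ) (u v : Fin 3 → ℝ),
      (exp (t • A) *ᵥ u) ⬝ᵥ (exp (t • A) *ᵥ v) = u ⬝ᵥ v := by
    intro t u v
    rw [dotProduct_mulVec, ← Matrix.mulVec_transpose, Matrix.mulVec_mulVec, key t,
      Matrix.one_mulVec]
  refine mem_tangentConeAt_of_curve
    (γ := fun t : ℝ => exp (t • A) * (rs • (vecMulVec n n - vecMulVec m m)) * (exp (t • A))ᵀ) ?_ ?_ ?_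
  · simp [zero_smul, exp_zero]
  · intro t
    refine ⟨exp (t • A) *ᵥ n, exp (t • A) *ᵥ m, by rw [hdot t n n, hn],
      by rw [hdot t m m, hm], by rw [hdot t n m, hnm], ?_⟩
    rw [Matrix.mul_smul, Matrix.smul_mul]
    congr 1
    rw [Matrix.mul_sub, Matrix.sub_mul, mul_vecMulVec, mul_vecMulVec, vecMulVec_mul,
      vecMulVec_mul, Matrix.transpose_transpose]
  · have hE : HasDerivAt (fun t : ℝ => exp (t • A)) (exp ((0:ℝ) • A) * A) 0 :=
      hasDerivAt_exp_smul_const A 0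
    have hfun : (fun t : ℝ => exp (t • Aᵀ)) = fun t : ℝ => (exp (t • A))ᵀ := by
      funext t
      rw [← Matrix.transpose_smul, Matrix.exp_transpose]
    have hET : HasDerivAt (fun t : ℝ => (exp (t • A))ᵀ) (exp ((0:ℝ) • Aᵀ) * Aᵀ) 0 := by
      rw [← hfun]
      exact hasDerivAt_exp_smul_const Aᵀ 0
    have h1 : HasDerivAt (fun t : ℝ => exp (t • A) * (rs • (vecMulVec n n - vecMulVec m m)))
        (exp ((0:ℝ) • A) * A * (rs • (vecMulVec n n - vecMulVec m m))) 0 :=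
      hE.mul_const (rs • (vecMulVec n n - vecMulVec m m))
    have h2 := h1.mul hET
    simp only [zero_smul, exp_zero, Matrix.one_mul, Matrix.mul_one] at h2
    rw [hAt] at h2
    refine h2.congr_deriv ?_
    symm
    rw [← hbracket, Matrix.transpose_one, Matrix.mul_one, Matrix.mul_neg, sub_eq_add_neg,
      add_comm]

lemma tangent_subset {rs : ℝ} {Q : M3} (hQ : Q ∈ Nman rs) :
    tangentConeAt ℝ (Nman rs) Q ⊆
      {P : M3 | Pᵀ = P ∧ P.trace = 0 ∧
        (P * Q).trace = 0 ∧ (P * (Q * Q)).trace = 0} := by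
  obtain ⟨hQs, hQtr, hQtr2, hQtr3⟩ := Nman_props hQ
  intro y hy'
  obtain ⟨c, d, hc, hmem, hy⟩ := mem_tangentConeAt_iff_exists_seq_norm_tendsto_atTop.mp hy'
  have hd0 : Tendsto d atTop (𝓝 0) := tangentConeAt.lim_zero atTop hc hy
  have htrace : Continuous (fun M : M3 => M.trace) :=
    (Matrix.traceLinearMap (Fin 3) ℝ ℝ).continuous_of_finiteDimensional
  have htp : Continuous (fun M : M3 => Mᵀ) :=
    (⟨⟨fun M => Mᵀ, fun a b => Matrix.transpose_add a b⟩,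
      fun r a => Matrix.transpose_smul r a⟩ :
        M3 →ₗ[ℝ] M3).continuous_of_finiteDimensional
  have hmulQ : Continuous (fun M : M3 => Q * M) :=
    (LinearMap.mulLeft ℝ Q).continuous_of_finiteDimensional
  -- eventual identities for d
  have hds : ∀ᶠ k in atTop, (d k)ᵀ = d k := by
    filter_upwards [hmem] with k hk
    have := (Nman_props hk).1
    rw [Matrix.transpose_add, hQs] at this
    exact add_left_cancel this
  have hdtr : ∀ᶠ k in atTop, (d k).trace = 0 := by
    filter_upwards [hmem] with k hk
    have := (Nman_props hk).2.1
    rw [Matrix.trace_add, hQtr, zero_add] at this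
    exact this
  have hdq : ∀ᶠ k in atTop, 2 * (Q * d k).trace + (d k * d k).trace = 0 := by
    filter_upwards [hmem] with k hk
    have h2 := (Nman_props hk).2.2.1
    have expand : (Q + d k) * (Q + d k) = Q * Q + (Q * d k + d k * Q + d k * d k) := by
      simp only [Matrix.add_mul, Matrix.mul_add]; abel
    rw [expand, Matrix.trace_add, hQtr2, Matrix.trace_add, Matrix.trace_add,
      Matrix.trace_mul_comm (d k) Q] at h2
    linarith
  have hdq2 : ∀ᶠ k in atTop,
      3 * (Q * Q * d k).trace + 3 * (Q * d k * d k).trace + (d k * d k * d k).trace = 0 := by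
    filter_upwards [hmem] with k hk
    have h3 := (Nman_props hk).2.2.2
    have expand : (Q + d k) * ((Q + d k) * (Q + d k)) =
        Q * (Q * Q) + (Q * (Q * d k) + Q * (d k * Q) + d k * (Q * Q))
          + (Q * (d k * d k) + d k * (Q * d k) + d k * (d k * Q)) + d k * (d k * d k) := by
      simp only [Matrix.add_mul, Matrix.mul_add]; abel
    rw [expand] at h3
    simp only [Matrix.trace_add] at h3
    rw [hQtr3] at h3
    have e1 : (Q * (d k * Q)).trace = (Q * Q * d k).trace := by
      rw [← Matrix.mul_assoc, Matrix.trace_mul_comm (Q * d k) Q, ← Matrix.mul_assoc]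
    have e2 : (d k * (Q * Q)).trace = (Q * Q * d k).trace := by
      rw [Matrix.trace_mul_comm]
    have e3 : (Q * (Q * d k)).trace = (Q * Q * d k).trace := by rw [Matrix.mul_assoc]
    have e4 : (d k * (Q * d k)).trace = (Q * d k * d k).trace := by
      rw [Matrix.trace_mul_comm]
    have e5 : (d k * (d k * Q)).trace = (Q * d k * d k).trace := by
      rw [← Matrix.mul_assoc, Matrix.trace_mul_comm (d k * d k) Q, ← Matrix.mul_assoc]
    have e6 : (Q * (d k * d k)).trace = (Q * d k * d k).trace := by rw [Matrix.mul_assoc]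
    have e7 : (d k * (d k * d k)).trace = (d k * d k * d k).trace := by rw [Matrix.mul_assoc]
    linarith
  -- now pass to the limit
  have hT2 : Tendsto (fun k => c k • d k) atTop (𝓝 y) := hy
  constructor
  · have h1 : Tendsto (fun k => (c k • d k)ᵀ) atTop (𝓝 yᵀ) :=
      (htp.tendsto y).comp hy
    have h2 : Tendsto (fun k => (c k • d k)ᵀ) atTop (𝓝 y) := by
      refine hy.congr' ?_
      filter_upwards [hds] with k hk
      rw [Matrix.transpose_smul, hk]
    exact tendsto_nhds_unique h1 h2
  refine ⟨?_, ?_, ?_⟩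
  · have h1 : Tendsto (fun k => (c k • d k).trace) atTop (𝓝 y.trace) :=
      (htrace.tendsto y).comp hy
    have h2 : Tendsto (fun k => (c k • d k).trace) atTop (𝓝 0) := by
      refine tendsto_const_nhds.congr' ?_
      filter_upwards [hdtr] with k hk
      rw [Matrix.trace_smul, hk, smul_zero]
    exact tendsto_nhds_unique h1 h2
  · have A1 : Tendsto (fun k => (Q * (c k • d k)).trace) atTop (𝓝 ((Q * y).trace)) :=
      (htrace.tendsto _).comp ((hmulQ.tendsto y).comp hy)
    have A2 : Tendsto (fun k => d k * (c k • d k)) atTop (𝓝 (0 * y)) := hd0.mul hy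
    have A3 : Tendsto (fun k => (d k * (c k • d k)).trace) atTop
        (𝓝 ((0 * y : M3)).trace) := (htrace.tendsto _).comp A2
    rw [Matrix.zero_mul, Matrix.trace_zero] at A3
    have h1 : Tendsto (fun k => 2 * (Q * (c k • d k)).trace + (d k * (c k • d k)).trace)
        atTop (𝓝 (2 * (Q * y).trace + 0)) := (tendsto_const_nhds.mul A1).add A3
    have h2 : Tendsto (fun k => 2 * (Q * (c k • d k)).trace + (d k * (c k • d k)).trace)
        atTop (𝓝 0) := by
      refine tendsto_const_nhds.congr' ?_
      filter_upwards [hdq] with k hk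
      rw [Matrix.mul_smul, Matrix.mul_smul, Matrix.trace_smul, Matrix.trace_smul]
      simp only [smul_eq_mul]
      linear_combination (-(c k)) * hk
    have := tendsto_nhds_unique h1 h2
    rw [Matrix.trace_mul_comm]
    linarith
  · have hmulQQ : Continuous (fun M : M3 => Q * Q * M) :=
      (LinearMap.mulLeft ℝ (Q * Q)).continuous_of_finiteDimensional
    have B1 : Tendsto (fun k => (Q * Q * (c k • d k)).trace) atTop (𝓝 ((Q * Q * y).trace)) :=
      (htrace.tendsto _).comp ((hmulQQ.tendsto y).comp hy)
    have B2 : Tendsto (fun k => Q * d k * (c k • d k)) atTop (𝓝 (Q * 0 * y)) :=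
      ((hmulQ.tendsto _).comp hd0).mul hy
    have B3 : Tendsto (fun k => (Q * d k * (c k • d k)).trace) atTop
        (𝓝 ((Q * 0 * y : M3)).trace) := (htrace.tendsto _).comp B2
    rw [Matrix.mul_zero, Matrix.zero_mul, Matrix.trace_zero] at B3
    have B4 : Tendsto (fun k => d k * d k * (c k • d k)) atTop (𝓝 (0 * 0 * y)) :=
      (hd0.mul hd0).mul hy
    have B5 : Tendsto (fun k => (d k * d k * (c k • d k)).trace) atTop
        (𝓝 ((0 * 0 * y : M3)).trace) := (htrace.tendsto _).comp B4
    rw [Matrix.zero_mul, Matrix.zero_mul, Matrix.trace_zero] at B5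
    have h1 : Tendsto (fun k =>
        3 * (Q * Q * (c k • d k)).trace + 3 * (Q * d k * (c k • d k)).trace
          + (d k * d k * (c k • d k)).trace)
        atTop (𝓝 (3 * (Q * Q * y).trace + 3 * 0 + 0)) :=
      ((tendsto_const_nhds.mul B1).add (tendsto_const_nhds.mul B3)).add B5
    have h2 : Tendsto (fun k =>
        3 * (Q * Q * (c k • d k)).trace + 3 * (Q * d k * (c k • d k)).trace
          + (d k * d k * (c k • d k)).trace) atTop (𝓝 0) := by
      refine tendsto_const_nhds.congr' ?_
      filter_upwards [hdq2] with k hk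
      rw [Matrix.mul_smul, Matrix.mul_smul, Matrix.mul_smul, Matrix.trace_smul, Matrix.trace_smul,
        Matrix.trace_smul]
      simp only [smul_eq_mul]
      linear_combination (-(c k)) * hk
    have := tendsto_nhds_unique h1 h2
    rw [Matrix.trace_mul_comm]
    linarith


lemma part2 {rs : ℝ} (hrs : 0 < rs) {Q : M3} (hQ : Q ∈ Nman rs)
    (hT : tangentConeAt ℝ (Nman rs) Q =
      {P : M3 | Pᵀ = P ∧ P.trace = 0 ∧ (P * Q).trace = 0 ∧ (P * (Q * Q)).trace = 0}) :
    {P : M3 | Pᵀ = P ∧ P.trace = 0 ∧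
        ∀ X ∈ tangentConeAt ℝ (Nman rs) Q, (Pᵀ * X).trace = 0} =
      (Submodule.span ℝ
        ({(Real.sqrt 2 * rs)⁻¹ • Q,
          (Real.sqrt 6 / (2 * rs ^ 2)) • (Q * Q - (2 * rs ^ 2 / 3) • (1 : M3))} :
          Set M3) : Set M3) := by
  obtain ⟨hQs, hQtr, hQtr2, hQtr3⟩ := Nman_props hQ
  obtain ⟨n, m, hn, hm, hnm, hQdef⟩ := hQ
  obtain ⟨p, hpp, hnp, hmp, hC⟩ := exists_completion hn hm hnm
  have hrs' : rs ≠ 0 := ne_of_gt hrs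
  have hs2 : Real.sqrt 2 ≠ 0 := ne_of_gt (Real.sqrt_pos.mpr (by norm_num))
  have hs6 : Real.sqrt 6 ≠ 0 := ne_of_gt (Real.sqrt_pos.mpr (by norm_num))
  have hmn : m ⬝ᵥ n = 0 := by rw [dotProduct_comm]; exact hnm
  have hpn : p ⬝ᵥ n = 0 := by rw [dotProduct_comm]; exact hnp
  have hpm : p ⬝ᵥ m = 0 := by rw [dotProduct_comm]; exact hmp
  have hQ2 : Q * Q = (rs * rs) • (vecMulVec n n + vecMulVec m m) := by
    rw [hQdef]; exact Qfacts hn hm hnm hpp hnp hmp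
  ext P
  simp only [Set.mem_setOf_eq, SetLike.mem_coe]
  constructor
  · rintro ⟨hPs, hPtr, horth⟩
    rw [hT] at horth
    -- membership of the off-diagonal generators in the tangent set
    have hSnm : (vecMulVec n m + vecMulVec m n) ∈
        {P : M3 | Pᵀ = P ∧ P.trace = 0 ∧ (P * Q).trace = 0 ∧ (P * (Q * Q)).trace = 0} := by
      refine ⟨by rw [Matrix.transpose_add, transpose_vecMulVec, transpose_vecMulVec, add_comm],
        by rw [Matrix.trace_add, trace_vecMulVec, trace_vecMulVec, hnm, hmn, add_zero], ?_, ?_⟩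
      · rw [hQdef]
        simp only [Matrix.mul_smul, Matrix.trace_smul, Matrix.add_mul, Matrix.mul_sub,
          vecMulVec_mul_vecMulVec, hmn, hm, hn, hnm, one_smul, zero_smul]
        simp only [Matrix.trace_add, Matrix.trace_sub, Matrix.trace_zero, trace_vecMulVec,
          hnm, hmn, smul_eq_mul]
        ring
      · rw [hQ2]
        simp only [Matrix.mul_smul, Matrix.trace_smul, Matrix.add_mul, Matrix.mul_add,
          vecMulVec_mul_vecMulVec, hmn, hm, hn, hnm, one_smul, zero_smul]
        simp only [Matrix.trace_add, Matrix.trace_zero, trace_vecMulVec, hnm, hmn, smul_eq_mul]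
        ring
    have hSnp : (vecMulVec n p + vecMulVec p n) ∈
        {P : M3 | Pᵀ = P ∧ P.trace = 0 ∧ (P * Q).trace = 0 ∧ (P * (Q * Q)).trace = 0} := by
      refine ⟨by rw [Matrix.transpose_add, transpose_vecMulVec, transpose_vecMulVec, add_comm],
        by rw [Matrix.trace_add, trace_vecMulVec, trace_vecMulVec, hnp, hpn, add_zero], ?_, ?_⟩
      · rw [hQdef]
        simp only [Matrix.mul_smul, Matrix.trace_smul, Matrix.add_mul, Matrix.mul_sub,
          vecMulVec_mul_vecMulVec, hpn, hpm, hn, hm, hnm, hmn, one_smul, zero_smul]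
        simp only [Matrix.trace_add, Matrix.trace_sub, Matrix.trace_zero, trace_vecMulVec,
          hnp, hpn, smul_eq_mul, sub_zero, zero_sub, Matrix.trace_neg]
        ring
      · rw [hQ2]
        simp only [Matrix.mul_smul, Matrix.trace_smul, Matrix.add_mul, Matrix.mul_add,
          vecMulVec_mul_vecMulVec, hpn, hpm, hn, hm, hnm, hmn, one_smul, zero_smul]
        simp only [Matrix.trace_add, Matrix.trace_zero, trace_vecMulVec, hnp, hpn, smul_eq_mul,
          add_zero, zero_add]
        ring
    have hSmp : (vecMulVec m p + vecMulVec p m) ∈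
        {P : M3 | Pᵀ = P ∧ P.trace = 0 ∧ (P * Q).trace = 0 ∧ (P * (Q * Q)).trace = 0} := by
      refine ⟨by rw [Matrix.transpose_add, transpose_vecMulVec, transpose_vecMulVec, add_comm],
        by rw [Matrix.trace_add, trace_vecMulVec, trace_vecMulVec, hmp, hpm, add_zero], ?_, ?_⟩
      · rw [hQdef]
        simp only [Matrix.mul_smul, Matrix.trace_smul, Matrix.add_mul, Matrix.mul_sub,
          vecMulVec_mul_vecMulVec, hpn, hpm, hn, hm, hnm, hmn, one_smul, zero_smul]
        simp only [Matrix.trace_add, Matrix.trace_sub, Matrix.trace_zero, trace_vecMulVec,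
          hmp, hpm, smul_eq_mul, sub_zero, zero_sub, Matrix.trace_neg]
        ring
      · rw [hQ2]
        simp only [Matrix.mul_smul, Matrix.trace_smul, Matrix.add_mul, Matrix.mul_add,
          vecMulVec_mul_vecMulVec, hpn, hpm, hn, hm, hnm, hmn, one_smul, zero_smul]
        simp only [Matrix.trace_add, Matrix.trace_zero, trace_vecMulVec, hmp, hpm, smul_eq_mul,
          add_zero, zero_add]
        ring
    -- off-diagonal coefficients of P vanish
    have hoff : ∀ u v : Fin 3 → ℝ, (Pᵀ * (vecMulVec u v + vecMulVec v u)).trace = 0 →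
        u ⬝ᵥ (P *ᵥ v) = 0 := by
      intro u v h
      rw [hPs, Matrix.mul_add, Matrix.trace_add, trace_mul_vecMulVec, trace_mul_vecMulVec,
        dot_mulVec_symm hPs v u] at h
      linarith
    have hx : n ⬝ᵥ (P *ᵥ m) = 0 := hoff n m (horth _ hSnm)
    have hy : n ⬝ᵥ (P *ᵥ p) = 0 := hoff n p (horth _ hSnp)
    have hz : m ⬝ᵥ (P *ᵥ p) = 0 := hoff m p (horth _ hSmp)
    have hdecomp : P = (n ⬝ᵥ (P *ᵥ n)) • vecMulVec n n + (m ⬝ᵥ (P *ᵥ m)) • vecMulVec m m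
        + (p ⬝ᵥ (P *ᵥ p)) • vecMulVec p p := by
      have := decomp hC hPs
      rw [hx, hy, hz] at this
      simpa using this
    have htrsum : n ⬝ᵥ (P *ᵥ n) + m ⬝ᵥ (P *ᵥ m) + p ⬝ᵥ (P *ᵥ p) = 0 := by
      have h1 : (P * (vecMulVec n n + vecMulVec m m + vecMulVec p p)).trace = P.trace := by
        rw [hC, Matrix.mul_one]
      rw [hPtr, Matrix.mul_add, Matrix.mul_add, Matrix.trace_add, Matrix.trace_add,
        trace_mul_vecMulVec, trace_mul_vecMulVec, trace_mul_vecMulVec] at h1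
      exact h1
    rw [Submodule.mem_span_pair]
    set a := n ⬝ᵥ (P *ᵥ n)
    set b := m ⬝ᵥ (P *ᵥ m)
    refine ⟨((a - b) / (2 * rs)) * (Real.sqrt 2 * rs),
      (3 * (a + b) / (2 * rs ^ 2)) * ((2 * rs ^ 2) / Real.sqrt 6), ?_⟩
    have hcpp : p ⬝ᵥ (P *ᵥ p) = -(a + b) := by linarith
    rw [hQ2, hQdef]
    conv_rhs => rw [hdecomp]
    rw [hcpp, ← hC]
    match_scalars <;> field_simp <;> ring
  · intro hP
    rw [Submodule.mem_span_pair] at hP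
    obtain ⟨a, b, rfl⟩ := hP
    have hQQs : (Q * Q)ᵀ = Q * Q := by rw [Matrix.transpose_mul, hQs]
    refine ⟨?_, ?_, ?_⟩
    · simp only [Matrix.transpose_add, Matrix.transpose_smul, Matrix.transpose_sub, hQs, hQQs,
        Matrix.transpose_one]
    · simp only [Matrix.trace_add, Matrix.trace_smul, Matrix.trace_sub, hQtr, hQtr2,
        Matrix.trace_one, smul_eq_mul]
      simp only [Fintype.card_fin]
      ring
    · intro X hX
      rw [hT] at hX
      obtain ⟨hXs, hXtr, hXQ, hXQ2⟩ := hX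
      have h1 : (Q * X).trace = 0 := by rw [Matrix.trace_mul_comm]; exact hXQ
      have h2 : ((Q * Q) * X).trace = 0 := by rw [Matrix.trace_mul_comm]; exact hXQ2
      simp only [Matrix.transpose_add, Matrix.transpose_smul, Matrix.transpose_sub, hQs, hQQs,
        Matrix.transpose_one, Matrix.add_mul, Matrix.smul_mul, Matrix.sub_mul, Matrix.one_mul,
        Matrix.trace_add, Matrix.trace_smul, Matrix.trace_sub, h1, h2, hXtr, smul_eq_mul]
      ring

end Stmt3Aux

/-- For `Q ∈ N`, the tangent space `T_Q N` (realized as the tangent cone of `N`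
at `Q`) equals `{P ∈ S₀ : tr(PQ) = 0, tr(PQ²) = 0}`, and the normal space, i.e. the orthogonal
complement of `T_Q N` inside the traceless symmetric matrices `S₀`, is spanned by
`Q/(√2 r*)` and `(√6/(2r*²))(Q² − (2r*²/3) I)`. -/
theorem stmt_3 (rs : ℝ) (hrs : 0 < rs) (Q : Matrix (Fin 3) (Fin 3) ℝ) (hQ : Q ∈ Nman rs) :
    tangentConeAt ℝ (Nman rs) Q =
      {P : Matrix (Fin 3) (Fin 3) ℝ | Pᵀ = P ∧ P.trace = 0 ∧
        (P * Q).trace = 0 ∧ (P * (Q * Q)).trace = 0} ∧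
    {P : Matrix (Fin 3) (Fin 3) ℝ | Pᵀ = P ∧ P.trace = 0 ∧
        ∀ X ∈ tangentConeAt ℝ (Nman rs) Q, (Pᵀ * X).trace = 0} =
      (Submodule.span ℝ
        ({(Real.sqrt 2 * rs)⁻¹ • Q,
          (Real.sqrt 6 / (2 * rs ^ 2)) •
            (Q * Q - (2 * rs ^ 2 / 3) • (1 : Matrix (Fin 3) (Fin 3) ℝ))} :
          Set (Matrix (Fin 3) (Fin 3) ℝ)) : Set (Matrix (Fin 3) (Fin 3) ℝ)) := by
  have hT := Set.Subset.antisymm (Stmt3Aux.tangent_subset hQ) (Stmt3Aux.tangent_superset hrs hQ)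
  exact ⟨hT, Stmt3Aux.part2 hrs hQ hT⟩
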